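/- Let A = diag(λ_1,…,λ_m) be an m×m diagonal matrix with all λ_i > 0. Then inf over nonzero w ∈ ℝ^m of ‖Aw‖_∞²/‖w‖² equals (Σ_{i=1}^m 1/λ_i²)⁻¹. -/

import Mathlib

open scoped BigOperators

theorem diagonal_hoffman_infty_constant {m : ℕ} (hm : 0 < m)
    (lam : Fin m → ℝ) (hlam : ∀ i, 0 < lam i) :
    (⨅ w : {w : EuclideanSpace ℝ (Fin m) // w ≠ 0},
        (⨆ i, (lam i * (w : EuclideanSpace ℝ (Fin m)) i) ^ 2) / ‖(w : EuclideanSpace ℝ (Fin m))‖ ^ 2)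
      = (∑ i, 1 / (lam i) ^ 2)⁻¹ := by
  haveI : Nonempty (Fin m) := ⟨⟨0, hm⟩⟩
  set S : ℝ := ∑ i, 1 / (lam i) ^ 2 with hS
  have hSpos : 0 < S :=
    Finset.sum_pos (fun i _ => by have := hlam i; positivity) ⟨⟨0, hm⟩, Finset.mem_univ _⟩
  have hnorm : ∀ x : EuclideanSpace ℝ (Fin m), ‖x‖ ^ 2 = ∑ i, (x i) ^ 2 := by
    intro x
    rw [EuclideanSpace.norm_eq, Real.sq_sqrt (by positivity)]
    simp [sq_abs]
  set w₀ : EuclideanSpace ℝ (Fin m) := WithLp.toLp 2 (fun i => (lam i)⁻¹) with hw₀def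
  have hw₀ : w₀ ≠ 0 := by
    intro h
    have h0 : w₀ ⟨0, hm⟩ = 0 := congrArg (fun v : EuclideanSpace ℝ (Fin m) => v ⟨0, hm⟩) h
    exact inv_ne_zero (hlam ⟨0, hm⟩).ne' h0
  apply le_antisymm
  · have hval : (⨆ i, (lam i * w₀ i) ^ 2) / ‖w₀‖ ^ 2 = S⁻¹ := by
      have h1 : ∀ i, (lam i * w₀ i) ^ 2 = 1 := fun i => by
        simp [hw₀def, mul_inv_cancel₀ (hlam i).ne']
      have h2 : (⨆ i, (lam i * w₀ i) ^ 2) = 1 := by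
        simp_rw [h1]; exact ciSup_const
      rw [h2, hnorm]
      have h3 : ∑ i, (w₀ i) ^ 2 = S := by
        simp [hw₀def, hS, one_div, inv_pow]
      rw [h3, one_div]
    calc (⨅ w : {w : EuclideanSpace ℝ (Fin m) // w ≠ 0},
        (⨆ i, (lam i * (w : EuclideanSpace ℝ (Fin m)) i) ^ 2) / ‖(w : EuclideanSpace ℝ (Fin m))‖ ^ 2)
        ≤ (⨆ i, (lam i * w₀ i) ^ 2) / ‖w₀‖ ^ 2 := by
          have hbb : BddBelow (Set.range fun w : {w : EuclideanSpace ℝ (Fin m) // w ≠ 0} =>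
              (⨆ i, (lam i * (w : EuclideanSpace ℝ (Fin m)) i) ^ 2) / ‖(w : EuclideanSpace ℝ (Fin m))‖ ^ 2) := by
            refine ⟨0, ?_⟩
            rintro x ⟨w, rfl⟩
            exact div_nonneg (Real.iSup_nonneg fun i => sq_nonneg _) (sq_nonneg _)
          exact ciInf_le hbb ⟨w₀, hw₀⟩
      _ = S⁻¹ := hval
  · haveI : Nonempty {w : EuclideanSpace ℝ (Fin m) // w ≠ 0} := ⟨⟨w₀, hw₀⟩⟩
    refine le_ciInf fun w => ?_
    obtain ⟨w, hw⟩ := w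
    set T : ℝ := ⨆ i, (lam i * w i) ^ 2 with hT
    have hbdd : BddAbove (Set.range fun i => (lam i * w i) ^ 2) :=
      Set.Finite.bddAbove (Set.finite_range _)
    have hle : ∀ i, (lam i * w i) ^ 2 ≤ T := fun i => le_ciSup hbdd i
    have hTnn : 0 ≤ T := le_trans (sq_nonneg _) (hle ⟨0, hm⟩)
    have hwne : ‖w‖ ≠ 0 := norm_ne_zero_iff.mpr hw
    have hwpos : 0 < ‖w‖ ^ 2 := by positivity
    rw [le_div_iff₀ hwpos, inv_mul_le_iff₀ hSpos, hnorm]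
    calc ∑ i, (w i) ^ 2 ≤ ∑ i, (1 / (lam i) ^ 2) * T := by
          refine Finset.sum_le_sum fun i _ => ?_
          have hl2 : 0 < (lam i) ^ 2 := by have := hlam i; positivity
          rw [one_div, inv_mul_eq_div, le_div_iff₀ hl2]
          calc (w i) ^ 2 * (lam i) ^ 2 = (lam i * w i) ^ 2 := by ring
            _ ≤ T := hle i
      _ = S * T := by rw [← Finset.sum_mul]
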